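/- arXiv:1903.03750 — 6 statements merged into one kernel-verified Lean document; each statement's English description precedes it below -/
import Mathlib

section
/- Let k be a field of characteristic different from 2 in which 7 is not a sum of three squares, let k(X₁,…,Xₙ) be the rational function field in n variables over k (the fraction field of the polynomial ring k[X₁,…,Xₙ]), and let k′ be any intermediate field with k ⊆ k′ ⊆ k(X₁,…,Xₙ). Then 7 is not a sum of three squares in k′. -/
open Polynomial

/-- `7` is a "sum of three squares with denominator" -/
def QQ (R : Type*) [CommRing R] : Prop :=
  ∃ f g h d : R, d ≠ 0 ∧ 7 * d ^ 2 = f ^ 2 + g ^ 2 + h ^ 2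

/-- a nontrivial vanishing sum of three squares exists -/
def NN (R : Type*) [CommRing R] : Prop :=
  ∃ f g h : R, (f ≠ 0 ∨ g ≠ 0 ∨ h ≠ 0) ∧ f ^ 2 + g ^ 2 + h ^ 2 = 0

lemma QQ_map {R S : Type*} [CommRing R] [CommRing S] (e : R →+* S)
    (he : Function.Injective e) (hq : QQ R) : QQ S := by
  obtain ⟨f, g, h, d, hd, heq⟩ := hq
  refine ⟨e f, e g, e h, e d, fun h0 => hd (he (by simpa using h0)), ?_⟩
  have := congrArg e heq
  simpa [map_ofNat] using this

lemma NN_map {R S : Type*} [CommRing R] [CommRing S] (e : R →+* S)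
    (he : Function.Injective e) (hq : NN R) : NN S := by
  obtain ⟨f, g, h, hne, heq⟩ := hq
  refine ⟨e f, e g, e h, ?_, ?_⟩
  · rcases hne with h0 | h0 | h0
    · exact Or.inl fun hh => h0 (he (by simpa using hh))
    · exact Or.inr (Or.inl fun hh => h0 (he (by simpa using hh)))
    · exact Or.inr (Or.inr fun hh => h0 (he (by simpa using hh)))
  · have := congrArg e heq
    simpa using this

lemma coeff_sq {R : Type*} [CommRing R] {f : R[X]} {m : ℕ} (hf : f.natDegree ≤ m) :
    (f ^ 2).coeff (2 * m) = f.coeff m ^ 2 :=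
  coeff_pow_of_natDegree_le hf

lemma attain {R : Type*} [CommRing R] (f g h : R[X])
    (hne : f ≠ 0 ∨ g ≠ 0 ∨ h ≠ 0) {m : ℕ}
    (hm : m = max (max f.natDegree g.natDegree) h.natDegree) :
    f.coeff m ≠ 0 ∨ g.coeff m ≠ 0 ∨ h.coeff m ≠ 0 := by
  have hfm : f.natDegree ≤ m := hm ▸ le_max_of_le_left (le_max_left _ _)
  have hgm : g.natDegree ≤ m := hm ▸ le_max_of_le_left (le_max_right _ _)
  have hhm : h.natDegree ≤ m := hm ▸ le_max_right _ _
  by_contra hc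
  push_neg at hc
  obtain ⟨hcf, hcg, hch⟩ := hc
  have key : ∀ p : R[X], p.natDegree ≤ m → p.coeff m = 0 → p = 0 ∨ p.natDegree < m := by
    intro p hp hc0
    rcases lt_or_eq_of_le hp with h' | h'
    · exact Or.inr h'
    · left
      by_contra hp0
      apply leadingCoeff_ne_zero.mpr hp0
      rw [Polynomial.leadingCoeff, h']
      exact hc0
  have hchoice : m = f.natDegree ∨ m = g.natDegree ∨ m = h.natDegree := by
    rcases max_choice (max f.natDegree g.natDegree) h.natDegree with h1 | h1
    · rcases max_choice f.natDegree g.natDegree with h2 | h2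
      · left; rw [hm, h1, h2]
      · right; left; rw [hm, h1, h2]
    · right; right; rw [hm, h1]
  rcases eq_or_ne m 0 with rfl | hm0
  · have kf := key f hfm hcf
    have kg := key g hgm hcg
    have kh := key h hhm hch
    rcases hne with h0 | h0 | h0
    · rcases kf with rfl | kf; · exact h0 rfl
      · omega
    · rcases kg with rfl | kg; · exact h0 rfl
      · omega
    · rcases kh with rfl | kh; · exact h0 rfl
      · omega
  · have kf : f.natDegree < m := by
      rcases key f hfm hcf with rfl | h'
      · simpa using Nat.pos_of_ne_zero hm0
      · exact h'
    have kg : g.natDegree < m := by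
      rcases key g hgm hcg with rfl | h'
      · simpa using Nat.pos_of_ne_zero hm0
      · exact h'
    have kh : h.natDegree < m := by
      rcases key h hhm hch with rfl | h'
      · simpa using Nat.pos_of_ne_zero hm0
      · exact h'
    omega

lemma step_NN {R : Type*} [CommRing R] (hN : ¬ NN R) : ¬ NN R[X] := by
  rintro ⟨f, g, h, hne, heq⟩
  set m := max (max f.natDegree g.natDegree) h.natDegree with hm
  have hfm : f.natDegree ≤ m := le_max_of_le_left (le_max_left _ _)
  have hgm : g.natDegree ≤ m := le_max_of_le_left (le_max_right _ _)
  have hhm : h.natDegree ≤ m := le_max_right _ _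
  have hcoeff : f.coeff m ^ 2 + g.coeff m ^ 2 + h.coeff m ^ 2 = 0 := by
    have := congrArg (fun p : R[X] => p.coeff (2 * m)) heq
    simpa [coeff_sq hfm, coeff_sq hgm, coeff_sq hhm] using this
  exact hN ⟨f.coeff m, g.coeff m, h.coeff m, attain f g h hne hm, hcoeff⟩

lemma step_QQ {R : Type*} [CommRing R] [IsDomain R] (hQ : ¬ QQ R) (hN : ¬ NN R) :
    ¬ QQ R[X] := by
  rintro ⟨f, g, h, d, hd, heq⟩
  have h7 : (7 : R) ≠ 0 := by
    intro h0
    exact hQ ⟨0, 0, 0, 1, one_ne_zero, by rw [h0]; ring⟩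
  set m := max (max (max f.natDegree g.natDegree) h.natDegree) d.natDegree with hm
  have hfm : f.natDegree ≤ m := le_max_of_le_left (le_max_of_le_left (le_max_left _ _))
  have hgm : g.natDegree ≤ m := le_max_of_le_left (le_max_of_le_left (le_max_right _ _))
  have hhm : h.natDegree ≤ m := le_max_of_le_left (le_max_right _ _)
  have hdm : d.natDegree ≤ m := le_max_right _ _
  have hC : (7 : R[X]) = Polynomial.C (7 : R) := (map_ofNat Polynomial.C 7).symm
  have hcoeff : 7 * d.coeff m ^ 2 = f.coeff m ^ 2 + g.coeff m ^ 2 + h.coeff m ^ 2 := by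
    have := congrArg (fun p : R[X] => p.coeff (2 * m)) heq
    simp only [hC] at this
    simpa [coeff_C_mul, coeff_sq hfm, coeff_sq hgm, coeff_sq hhm, coeff_sq hdm] using this
  rcases eq_or_ne (d.coeff m) 0 with hdc | hdc
  · -- then m is the max of f,g,h degrees
    have hdlt : d.natDegree < m := by
      rcases lt_or_eq_of_le hdm with h' | h'
      · exact h'
      · exfalso; apply leadingCoeff_ne_zero.mpr hd
        rw [Polynomial.leadingCoeff, h']; exact hdc
    have hm3 : m = max (max f.natDegree g.natDegree) h.natDegree := by
      rcases max_choice (max (max f.natDegree g.natDegree) h.natDegree) d.natDegree with h' | h'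
      · omega
      · omega
    have hne : f ≠ 0 ∨ g ≠ 0 ∨ h ≠ 0 := by
      by_contra hc
      push_neg at hc
      obtain ⟨rfl, rfl, rfl⟩ := hc
      have : (7 : R[X]) * d ^ 2 = 0 := by rw [heq]; ring
      rcases mul_eq_zero.mp this with h0 | h0
      · rw [hC] at h0
        exact h7 (Polynomial.C_eq_zero.mp h0)
      · exact hd (pow_eq_zero_iff (n := 2) (by norm_num) |>.mp h0)
    have hsum : f.coeff m ^ 2 + g.coeff m ^ 2 + h.coeff m ^ 2 = 0 := by
      rw [← hcoeff, hdc]; ring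
    exact hN ⟨f.coeff m, g.coeff m, h.coeff m, attain f g h hne hm3, hsum⟩
  · exact hQ ⟨f.coeff m, g.coeff m, h.coeff m, d.coeff m, hdc, hcoeff⟩

lemma neg_one_to_seven {K : Type*} [Field K] (a b : K) (hab : a ^ 2 + b ^ 2 = -1) :
    ∃ x y z : K, (7 : K) = x ^ 2 + y ^ 2 + z ^ 2 :=
  ⟨4, 3 * a, 3 * b, by linear_combination (-9 : K) * hab⟩

lemma base_QQ {k : Type*} [Field k] (h7 : ¬ ∃ x y z : k, (7 : k) = x ^ 2 + y ^ 2 + z ^ 2) :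
    ¬ QQ k := by
  rintro ⟨f, g, h, d, hd, heq⟩
  exact h7 ⟨f / d, g / d, h / d, by field_simp; linear_combination heq⟩

lemma base_NN {k : Type*} [Field k] (h7 : ¬ ∃ x y z : k, (7 : k) = x ^ 2 + y ^ 2 + z ^ 2) :
    ¬ NN k := by
  rintro ⟨f, g, h, hne, heq⟩
  have key : ∀ u v w : k, u ≠ 0 → u ^ 2 + v ^ 2 + w ^ 2 = 0 → False := by
    intro u v w hu he
    exact h7 (neg_one_to_seven (v / u) (w / u) (by field_simp; linear_combination he))
  rcases hne with h0 | h0 | h0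
  · exact key f g h h0 heq
  · exact key g f h h0 (by linear_combination heq)
  · exact key h f g h0 (by linear_combination heq)

lemma mv_good (k : Type*) [Field k] (h7 : ¬ ∃ x y z : k, (7 : k) = x ^ 2 + y ^ 2 + z ^ 2)
    (n : ℕ) : ¬ QQ (MvPolynomial (Fin n) k) ∧ ¬ NN (MvPolynomial (Fin n) k) := by
  induction n with
  | zero =>
    have e := MvPolynomial.isEmptyRingEquiv k (Fin 0)
    exact ⟨fun hq => base_QQ h7 (QQ_map e.toRingHom e.injective hq),
           fun hn => base_NN h7 (NN_map e.toRingHom e.injective hn)⟩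
  | succ n ih =>
    have e := (MvPolynomial.finSuccEquiv k n).toRingEquiv
    exact ⟨fun hq => step_QQ ih.1 ih.2 (QQ_map e.toRingHom e.injective hq),
           fun hn => step_NN ih.2 (NN_map e.toRingHom e.injective hn)⟩

/-- If `7` is not a sum of three squares in a field `k` of characteristic `≠ 2`, then `7` is
not a sum of three squares in any intermediate field `k ⊆ k' ⊆ k(X₁, …, Xₙ)` of the rational
function field in `n` variables over `k`. -/
theorem not_sum_three_squares_subfield_of_rational_function_field
    (k : Type*) [Field k] (hchar : ringChar k ≠ 2)
    (h7 : ¬ ∃ x y z : k, (7 : k) = x ^ 2 + y ^ 2 + z ^ 2)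
    (n : ℕ) (k' : IntermediateField k (FractionRing (MvPolynomial (Fin n) k))) :
    ¬ ∃ x y z : k', (7 : k') = x ^ 2 + y ^ 2 + z ^ 2 := by
  rintro ⟨x, y, z, hxyz⟩
  set R := MvPolynomial (Fin n) k with hR
  set L := FractionRing R with hLdef
  have hL : (7 : L) = (x : L) ^ 2 + (y : L) ^ 2 + (z : L) ^ 2 := by
    have := congrArg (k'.val) hxyz
    simpa [map_ofNat] using this
  obtain ⟨a₁, b₁, hb₁, hx⟩ := IsFractionRing.div_surjective (A := R) (x : L)
  obtain ⟨a₂, b₂, hb₂, hy⟩ := IsFractionRing.div_surjective (A := R) (y : L)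
  obtain ⟨a₃, b₃, hb₃, hz⟩ := IsFractionRing.div_surjective (A := R) (z : L)
  have hB₁ : algebraMap R L b₁ ≠ 0 := IsFractionRing.to_map_ne_zero_of_mem_nonZeroDivisors hb₁
  have hB₂ : algebraMap R L b₂ ≠ 0 := IsFractionRing.to_map_ne_zero_of_mem_nonZeroDivisors hb₂
  have hB₃ : algebraMap R L b₃ ≠ 0 := IsFractionRing.to_map_ne_zero_of_mem_nonZeroDivisors hb₃
  apply (mv_good k h7 n).1
  refine ⟨a₁ * b₂ * b₃, b₁ * a₂ * b₃, b₁ * b₂ * a₃, b₁ * b₂ * b₃, ?_, ?_⟩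
  · exact mul_ne_zero (mul_ne_zero (mem_nonZeroDivisors_iff_ne_zero.mp hb₁)
      (mem_nonZeroDivisors_iff_ne_zero.mp hb₂)) (mem_nonZeroDivisors_iff_ne_zero.mp hb₃)
  · apply IsFractionRing.injective R L
    have hA₁ : algebraMap R L a₁ = (x : L) * algebraMap R L b₁ := by
      rw [← hx]; exact (div_mul_cancel₀ _ hB₁).symm
    have hA₂ : algebraMap R L a₂ = (y : L) * algebraMap R L b₂ := by
      rw [← hy]; exact (div_mul_cancel₀ _ hB₂).symm
    have hA₃ : algebraMap R L a₃ = (z : L) * algebraMap R L b₃ := by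
      rw [← hz]; exact (div_mul_cancel₀ _ hB₃).symm
    simp only [map_mul, map_add, map_pow, map_ofNat]
    rw [hA₁, hA₂, hA₃]
    linear_combination (algebraMap R L b₁)^2 * (algebraMap R L b₂)^2 * (algebraMap R L b₃)^2 * hL
end

section
/- Let k be a field and s a positive integer such that −1 is a sum of s squares in k. If d is a non-negative integer with 2^d ≤ s < 2^{d+1}, then −1 is a sum of 2^d squares in k. -/
open Matrix

theorem fromBlocks_smul_one_aux {k : Type*} [Semiring k] {n : Type*} [Fintype n]
    [DecidableEq n] (c : k) :
    Matrix.fromBlocks (c • 1 : Matrix n n k) 0 0 (c • 1) = c • (1 : Matrix (n ⊕ n) (n ⊕ n) k) := by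
  rw [← Matrix.fromBlocks_one (l := n) (m := n) (α := k), Matrix.fromBlocks_smul]
  simp only [smul_zero]

open Matrix in
/-- Key lemma: any sum of `2^d` squares `α` admits a `2^d × 2^d` matrix `A`
with `Aᵀ * A = α • 1`. -/
theorem pfister_matrix {k : Type*} [Field k] (d : ℕ) (α : k)
    (h : ∃ x : Fin (2 ^ d) → k, α = ∑ i, x i ^ 2) :
    ∃ A : Matrix (Fin (2 ^ d)) (Fin (2 ^ d)) k, Aᵀ * A = α • 1 := by
  induction d generalizing α with
  | zero =>
    obtain ⟨x, hx⟩ := h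
    refine ⟨Matrix.of fun _ _ => x 0, ?_⟩
    ext i j
    fin_cases i; fin_cases j
    simp [Matrix.mul_apply, hx, sq]
  | succ d ih =>
    have e : 2 ^ (d + 1) = 2 ^ d + 2 ^ d := by rw [pow_succ, mul_two]
    obtain ⟨x, hx⟩ := h
    set n := 2 ^ d with hn
    -- split the sum
    have hsum : α = (∑ i : Fin n, (x (Fin.cast e.symm (Fin.castAdd n i))) ^ 2)
        + (∑ i : Fin n, (x (Fin.cast e.symm (Fin.natAdd n i))) ^ 2) := by
      rw [hx, ← Fin.sum_congr' (fun i => x i ^ 2) e.symm, Fin.sum_univ_add]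
    set β : k := ∑ i : Fin n, (x (Fin.cast e.symm (Fin.castAdd n i))) ^ 2 with hβ
    set γ : k := ∑ i : Fin n, (x (Fin.cast e.symm (Fin.natAdd n i))) ^ 2 with hγ
    obtain ⟨A, hA⟩ := ih β ⟨_, hβ⟩
    obtain ⟨B, hB⟩ := ih γ ⟨_, hγ⟩
    -- build a block matrix over Fin n ⊕ Fin n
    have key : ∃ M : Matrix (Fin n ⊕ Fin n) (Fin n ⊕ Fin n) k, Mᵀ * M = α • 1 := by
      by_cases hβ0 : β = 0
      · refine ⟨Matrix.fromBlocks B 0 0 B, ?_⟩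
        have hαγ : α = γ := by rw [hsum, hβ0, zero_add]
        rw [Matrix.fromBlocks_transpose, Matrix.fromBlocks_multiply]
        simp only [Matrix.transpose_zero, Matrix.mul_zero, Matrix.zero_mul, add_zero,
          zero_add, hB, hαγ]
        exact fromBlocks_smul_one_aux γ
      · by_cases hγ0 : γ = 0
        · refine ⟨Matrix.fromBlocks A 0 0 A, ?_⟩
          have hαβ : α = β := by rw [hsum, hγ0, add_zero]
          rw [Matrix.fromBlocks_transpose, Matrix.fromBlocks_multiply]
          simp only [Matrix.transpose_zero, Matrix.mul_zero, Matrix.zero_mul, add_zero,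
            zero_add, hA, hαβ]
          exact fromBlocks_smul_one_aux β
        · -- both nonzero : A and B are invertible
          have hA' : A * Aᵀ = β • 1 := by
            have h1 : (β⁻¹ • Aᵀ) * A = 1 := by
              rw [Matrix.smul_mul, hA, smul_smul, inv_mul_cancel₀ hβ0, one_smul]
            have h2 : A * (β⁻¹ • Aᵀ) = 1 := mul_eq_one_comm.mpr h1
            calc A * Aᵀ = A * (β • (β⁻¹ • Aᵀ)) := by
                  rw [smul_smul, mul_inv_cancel₀ hβ0, one_smul]
              _ = β • (A * (β⁻¹ • Aᵀ)) := by rw [Matrix.mul_smul]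
              _ = β • 1 := by rw [h2]
          have hB' : B * Bᵀ = γ • 1 := by
            have h1 : (γ⁻¹ • Bᵀ) * B = 1 := by
              rw [Matrix.smul_mul, hB, smul_smul, inv_mul_cancel₀ hγ0, one_smul]
            have h2 : B * (γ⁻¹ • Bᵀ) = 1 := mul_eq_one_comm.mpr h1
            calc B * Bᵀ = B * (γ • (γ⁻¹ • Bᵀ)) := by
                  rw [smul_smul, mul_inv_cancel₀ hγ0, one_smul]
              _ = γ • (B * (γ⁻¹ • Bᵀ)) := by rw [Matrix.mul_smul]
              _ = γ • 1 := by rw [h2]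
          refine ⟨Matrix.fromBlocks A B (-(β⁻¹ • (Aᵀ * Bᵀ * A))) Aᵀ, ?_⟩
          rw [Matrix.fromBlocks_transpose, Matrix.fromBlocks_multiply]
          have c11 : Aᵀ * A + (-(β⁻¹ • (Aᵀ * Bᵀ * A)))ᵀ * (-(β⁻¹ • (Aᵀ * Bᵀ * A))) = α • 1 := by
            have : (-(β⁻¹ • (Aᵀ * Bᵀ * A)))ᵀ * (-(β⁻¹ • (Aᵀ * Bᵀ * A)))
                = (β⁻¹ * β⁻¹) • (Aᵀ * B * A * (Aᵀ * Bᵀ * A)) := by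
              simp [Matrix.transpose_smul, Matrix.smul_mul, Matrix.mul_smul, smul_smul,
                Matrix.transpose_mul, mul_assoc]
            rw [this]
            have : Aᵀ * B * A * (Aᵀ * Bᵀ * A) = (β * γ * β) • (1 : Matrix (Fin n) (Fin n) k) := by
              calc Aᵀ * B * A * (Aᵀ * Bᵀ * A) = Aᵀ * B * (A * Aᵀ) * Bᵀ * A := by
                    noncomm_ring
                _ = Aᵀ * B * (β • 1) * Bᵀ * A := by rw [hA']
                _ = β • (Aᵀ * (B * Bᵀ) * A) := by
                    simp [Matrix.mul_smul, Matrix.smul_mul, mul_assoc]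
                _ = β • (Aᵀ * (γ • 1) * A) := by rw [hB']
                _ = (β * γ) • (Aᵀ * A) := by
                    simp [Matrix.mul_smul, Matrix.smul_mul, smul_smul]
                _ = (β * γ) • (β • (1 : Matrix (Fin n) (Fin n) k)) := by rw [hA]
                _ = (β * γ * β) • 1 := by rw [smul_smul]
            rw [this, hA, smul_smul, hsum]
            rw [← add_smul]
            congr 1
            field_simp
          have c12 : Aᵀ * B + (-(β⁻¹ • (Aᵀ * Bᵀ * A)))ᵀ * Aᵀ = 0 := by
            have : (-(β⁻¹ • (Aᵀ * Bᵀ * A)))ᵀ * Aᵀ = -(β⁻¹ • (Aᵀ * B * (A * Aᵀ))) := by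
              simp [Matrix.transpose_smul, Matrix.smul_mul, Matrix.transpose_mul, mul_assoc]
            rw [this, hA', Matrix.mul_smul, smul_smul, inv_mul_cancel₀ hβ0, one_smul, mul_one,
              add_neg_cancel]
          have c21 : Bᵀ * A + A * (-(β⁻¹ • (Aᵀ * Bᵀ * A))) = 0 := by
            have : A * (-(β⁻¹ • (Aᵀ * Bᵀ * A))) = -(β⁻¹ • ((A * Aᵀ) * Bᵀ * A)) := by
              simp [Matrix.mul_smul, mul_assoc]
            rw [this, hA', Matrix.smul_mul, Matrix.smul_mul, smul_smul,
              inv_mul_cancel₀ hβ0, one_smul, one_mul, add_neg_cancel]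
          have c22 : Bᵀ * B + A * Aᵀ = α • 1 := by
            rw [hB, hA', hsum, add_smul, add_comm]
          rw [c11, c12]
          simp only [Matrix.transpose_transpose]
          rw [c21, c22]
          exact fromBlocks_smul_one_aux α
    obtain ⟨M, hM⟩ := key
    have e' : Fin (2 ^ (d + 1)) ≃ (Fin n ⊕ Fin n) := (finCongr e).trans finSumFinEquiv.symm
    refine ⟨M.submatrix e' e', ?_⟩
    rw [Matrix.transpose_submatrix, Matrix.submatrix_mul_equiv, hM]
    ext i j
    simp [Matrix.submatrix_apply, Matrix.one_apply, Equiv.apply_eq_iff_eq]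

/-- A sum of `2^d` squares from a matrix: column norms. -/
theorem sos_of_pfister_matrix {k : Type*} [Field k] {n : ℕ} (hn : 0 < n) (α : k)
    (A : Matrix (Fin n) (Fin n) k) (hA : Aᵀ * A = α • 1) :
    ∃ x : Fin n → k, α = ∑ i, x i ^ 2 := by
  refine ⟨fun i => A i ⟨0, hn⟩, ?_⟩
  have := congrFun (congrFun hA ⟨0, hn⟩) ⟨0, hn⟩
  simp [Matrix.mul_apply, Matrix.one_apply, Matrix.smul_apply] at this
  rw [← this]
  exact Finset.sum_congr rfl fun i _ => (sq _).symm

/-- Pfister multiplicativity: sums of `2^d` squares are closed under products. -/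
theorem sos_mul {k : Type*} [Field k] (d : ℕ) (α β : k)
    (hα : ∃ x : Fin (2 ^ d) → k, α = ∑ i, x i ^ 2)
    (hβ : ∃ x : Fin (2 ^ d) → k, β = ∑ i, x i ^ 2) :
    ∃ x : Fin (2 ^ d) → k, α * β = ∑ i, x i ^ 2 := by
  obtain ⟨A, hA⟩ := pfister_matrix d α hα
  obtain ⟨y, hy⟩ := hβ
  refine ⟨A.mulVec y, ?_⟩
  have h1 : ∑ i, (A.mulVec y) i ^ 2 = (A.mulVec y) ⬝ᵥ (A.mulVec y) := by
    simp [dotProduct, sq]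
  have h2 : (A.mulVec y) ⬝ᵥ (A.mulVec y) = ((Aᵀ * A).mulVec y) ⬝ᵥ y := by
    rw [Matrix.dotProduct_mulVec, ← Matrix.mulVec_transpose, ← Matrix.mulVec_mulVec]
  rw [h1, h2, hA, Matrix.smul_mulVec, Matrix.one_mulVec, smul_dotProduct,
    smul_eq_mul]
  congr 1
  rw [hy]
  simp [dotProduct, sq]

/-- Padding with zeros. -/
theorem sos_mono {k : Type*} [Field k] {m n : ℕ} (hmn : m ≤ n) (α : k)
    (h : ∃ x : Fin m → k, α = ∑ i, x i ^ 2) :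
    ∃ x : Fin n → k, α = ∑ i, x i ^ 2 := by
  classical
  obtain ⟨x, hx⟩ := h
  refine ⟨fun i => if hi : (i : ℕ) < m then x ⟨i, hi⟩ else 0, hx.trans ?_⟩
  set g : ℕ → k := fun i => (if hi : i < m then x ⟨i, hi⟩ else 0) ^ 2 with hg
  have l1 : ∑ i : Fin m, x i ^ 2 = ∑ i ∈ Finset.range m, g i := by
    rw [← Fin.sum_univ_eq_sum_range g m]
    refine Finset.sum_congr rfl fun i _ => ?_
    simp [hg, i.isLt]
  have l2 : ∑ i ∈ Finset.range m, g i = ∑ i ∈ Finset.range n, g i := by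
    refine Finset.sum_subset (Finset.range_subset_range.2 hmn) fun i _ hi => ?_
    have : ¬ i < m := by simpa using hi
    simp [hg, this]
  rw [l1, l2, ← Fin.sum_univ_eq_sum_range g n]

/-- **Pfister.** If `-1` is a sum of `s` squares in a field `k` and `2^d ≤ s < 2^(d+1)`,
then `-1` is a sum of `2^d` squares in `k`. -/
theorem neg_one_sum_two_pow_squares (k : Type*) [Field k] (s : ℕ) (hs : 0 < s)
    (h : ∃ x : Fin s → k, (-1 : k) = ∑ i, x i ^ 2)
    (d : ℕ) (hd1 : 2 ^ d ≤ s) (hd2 : s < 2 ^ (d + 1)) :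
    ∃ x : Fin (2 ^ d) → k, (-1 : k) = ∑ i, x i ^ 2 := by
  set n := 2 ^ d with hn
  obtain ⟨x, hx⟩ := h
  have es : s = n + (s - n) := (Nat.add_sub_cancel' hd1).symm
  have hmlt : s - n < n := by
    have h2n : s < n + n := by
      have : (2:ℕ) ^ (d+1) = n + n := by rw [hn, pow_succ, mul_two]
      omega
    omega
  have hsum : (-1 : k) = (∑ i : Fin n, (x (Fin.cast es.symm (Fin.castAdd (s - n) i))) ^ 2)
      + (∑ i : Fin (s - n), (x (Fin.cast es.symm (Fin.natAdd n i))) ^ 2) := by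
    rw [hx, ← Fin.sum_congr' (fun i => x i ^ 2) es.symm, Fin.sum_univ_add]
  set a : k := ∑ i : Fin n, (x (Fin.cast es.symm (Fin.castAdd (s - n) i))) ^ 2 with ha
  set b : k := ∑ i : Fin (s - n), (x (Fin.cast es.symm (Fin.natAdd n i))) ^ 2 with hb
  by_cases ha0 : a = 0
  · -- then -1 = b, a sum of s - n < n squares
    have : (-1 : k) = b := by rw [hsum, ha0, zero_add]
    exact sos_mono hmlt.le _ ⟨_, this.trans hb⟩
  · -- -a = 1 + b is a sum of n squares
    have hbsos : ∃ y : Fin (s - n + 1) → k, (-a : k) = ∑ i, y i ^ 2 := by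
      refine ⟨Fin.cons 1 (fun i => x (Fin.cast es.symm (Fin.natAdd n i))), ?_⟩
      rw [Fin.sum_univ_succ]
      simp only [Fin.cons_zero, Fin.cons_succ, one_pow]
      have : (-a : k) = 1 + b := by linear_combination hsum
      rw [this, hb]
    have hna : ∃ y : Fin n → k, (-a : k) = ∑ i, y i ^ 2 :=
      sos_mono (by omega) _ hbsos
    have hasos : ∃ y : Fin n → k, a = ∑ i, y i ^ 2 := ⟨_, ha⟩
    have hinv : ∃ y : Fin n → k, ((a⁻¹) ^ 2 : k) = ∑ i, y i ^ 2 := by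
      refine sos_mono (Nat.one_le_two_pow) _ ⟨fun _ => a⁻¹, ?_⟩
      rw [Fin.sum_univ_one]
    have h1 := sos_mul d _ _ hna hasos
    have h2 := sos_mul d _ _ h1 hinv
    have : (-a) * a * (a⁻¹) ^ 2 = (-1 : k) := by
      field_simp
    rwa [this] at h2
end

section
/- Let d be a square-free integer with d ≡ 1 (mod 8) and d ≠ 1, and let k = ℚ(√d) be the real quadratic field obtained by adjoining √d to ℚ inside ℝ. Then 7 is not a sum of three squares in k. -/
private lemma sq_mod_pow (e : ℤ) (he : e = 0 ∨ e % 8 = 1) (n : ℕ) :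
    ∃ s : ℤ, (2:ℤ)^n ∣ s^2 - e := by
  rcases he with rfl | he
  · exact ⟨0, by simp⟩
  have H : ∀ m : ℕ, ∃ s : ℤ, (2:ℤ)^(m+3) ∣ s^2 - e := by
    intro m
    induction m with
    | zero => exact ⟨1, by norm_num; omega⟩
    | succ m ih =>
      obtain ⟨s, t, ht⟩ := ih
      have hodd : Odd s := by
        have h2 : (2:ℤ) ∣ s^2 - e := by
          refine dvd_trans ⟨2^(m+2), by ring⟩ ⟨t, ht⟩
        have heo : Odd e := by rw [Int.odd_iff]; omega
        have : Odd (s^2) := by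
          rcases Int.even_or_odd (s^2) with hev | hod
          · exfalso
            have : Odd (s^2 - e) := hev.sub_odd heo
            rw [Int.odd_iff] at this
            omega
          · exact hod
        rcases Int.odd_pow.mp this with h | h
        · exact h
        · exact absurd h (by norm_num)
      obtain ⟨u, hu⟩ := hodd
      refine ⟨s + 2^(m+2)*t, t*(u+1) + 2^m*t^2, ?_⟩
      linear_combination ht + (2^(m+3)*t) * hu
  obtain ⟨s, hs⟩ := H n
  exact ⟨s, dvd_trans (pow_dvd_pow 2 (by omega)) hs⟩

private lemma zmod8_aux : ∀ a b c m : ZMod 8, a^2+b^2+c^2 ≠ 7*(2*m+1)^2 := by decide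

private lemma zmod4_aux : ∀ a b c : ZMod 4, a^2+b^2+c^2 = 0 → a^2 = 0 ∧ b^2 = 0 ∧ c^2 = 0 := by
  decide

private lemma sq_even {x : ℤ} (h : ((x:ZMod 4))^2 = 0) : ∃ a, x = 2*a := by
  have h4 : (4:ℤ) ∣ x^2 := by
    have : ((x^2 : ℤ) : ZMod 4) = 0 := by push_cast; exact h
    exact_mod_cast (ZMod.intCast_zmod_eq_zero_iff_dvd (x^2) 4).1 this
  exact Int.prime_two.dvd_of_dvd_pow (dvd_trans ⟨2, by norm_num⟩ h4)

private lemma no_three (v : ℕ) : ∀ x y z M : ℤ, M % 2 = 1 →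
    ¬ ((2:ℤ)^(2*v+3) ∣ x^2+y^2+z^2 - 7*4^v*M^2) := by
  induction v with
  | zero =>
    intro x y z M hM h
    norm_num at h
    obtain ⟨m, rfl⟩ : ∃ m, M = 2*m+1 := ⟨M/2, by omega⟩
    have h0 := (ZMod.intCast_zmod_eq_zero_iff_dvd (x^2+y^2+z^2 - 7*(2*m+1)^2) 8).2 h
    push_cast at h0
    rw [sub_eq_zero] at h0
    exact zmod8_aux _ _ _ _ h0
  | succ v ih =>
    intro x y z M hM h
    have h4 : (4:ℤ) ∣ x^2+y^2+z^2 := by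
      have h1 : (4:ℤ) ∣ x^2+y^2+z^2 - 7*4^(v+1)*M^2 :=
        dvd_trans ⟨2^(2*v+3), by ring⟩ h
      have h2 : (4:ℤ) ∣ 7*4^(v+1)*M^2 := ⟨7*4^v*M^2, by ring⟩
      have := dvd_add h1 h2
      simpa using this
    have h0 : ((x:ZMod 4))^2+(y:ZMod 4)^2+(z:ZMod 4)^2 = 0 := by
      have := (ZMod.intCast_zmod_eq_zero_iff_dvd (x^2+y^2+z^2) 4).2 h4
      push_cast at this
      exact this
    obtain ⟨hx4, hy4, hz4⟩ := zmod4_aux _ _ _ h0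
    obtain ⟨a, rfl⟩ := sq_even hx4
    obtain ⟨b, rfl⟩ := sq_even hy4
    obtain ⟨c, rfl⟩ := sq_even hz4
    refine ih a b c M hM ?_
    have key : (2*a)^2+(2*b)^2+(2*c)^2 - 7*4^(v+1)*M^2
        = 4*((a^2+b^2+c^2) - 7*4^v*M^2) := by ring
    rw [key] at h
    have hpow : (2:ℤ)^(2*(v+1)+3) = 4*2^(2*v+3) := by ring
    rw [hpow] at h
    exact (mul_dvd_mul_iff_left (by norm_num : (4:ℤ) ≠ 0)).mp h

private lemma rep_mem {r : ℝ} {e : ℚ} (hre : r^2 = (e:ℝ)) {x : ℝ}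
    (hx : x ∈ Algebra.adjoin ℚ ({r} : Set ℝ)) : ∃ a b : ℚ, x = a + b*r := by
  induction hx using Algebra.adjoin_induction with
  | mem y hy =>
    rw [Set.mem_singleton_iff] at hy
    exact ⟨0, 1, by simp [hy]⟩
  | algebraMap q => exact ⟨q, 0, by simp⟩
  | add u w hu hw ihu ihw =>
    obtain ⟨a, b, rfl⟩ := ihu
    obtain ⟨c, f, rfl⟩ := ihw
    exact ⟨a + c, b + f, by push_cast; ring⟩
  | mul u w hu hw ihu ihw =>
    obtain ⟨a, b, rfl⟩ := ihu
    obtain ⟨c, f, rfl⟩ := ihw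
    refine ⟨a*c + e*(b*f), a*f + b*c, ?_⟩
    push_cast
    linear_combination (b:ℝ)*(f:ℝ)*hre

private lemma exists_int_mul {q : ℚ} {N : ℤ} (h : (q.den:ℤ) ∣ N) : ∃ A : ℤ, (A:ℚ) = q * N := by
  obtain ⟨c, hc⟩ := h
  refine ⟨q.num * c, ?_⟩
  have hq : (q.num : ℚ) = q * q.den := by
    rw [Rat.mul_den_eq_num]
  rw [hc]; push_cast [hq]; ring

/-- If `d ≡ 1 (mod 8)` is a square-free integer, `d ≠ 1`, then `7` is not a sum of
three squares in the real quadratic field `k = ℚ(√d)`. -/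
theorem not_sum_three_squares_real_quadratic
    (d : ℤ) (hsf : Squarefree d) (hd : d % 8 = 1) (hd1 : d ≠ 1)
    (k : IntermediateField ℚ ℝ) (hk : k = IntermediateField.adjoin ℚ {Real.sqrt d}) :
    ¬ ∃ x y z : k, (7 : k) = x ^ 2 + y ^ 2 + z ^ 2 := by
  subst hk
  set r : ℝ := Real.sqrt d with hr
  rintro ⟨x, y, z, hxyz⟩
  obtain ⟨e, he8, hre, hcase⟩ :
      ∃ e : ℤ, (e = 0 ∨ e % 8 = 1) ∧ r^2 = (e:ℝ) ∧ (Irrational r ∨ r = 0) := by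
    rcases le_or_gt 0 d with hd0 | hd0
    · refine ⟨d, Or.inr hd, Real.sq_sqrt (by exact_mod_cast hd0), Or.inl ?_⟩
      rw [irrational_sqrt_intCast_iff_of_nonneg hd0]
      rintro ⟨w, hw⟩
      have hu : IsUnit w := hsf w (by rw [hw])
      rcases Int.isUnit_iff.mp hu with rfl | rfl <;> omega
    · have hr0 : r = 0 := Real.sqrt_eq_zero_of_nonpos (by exact_mod_cast hd0.le)
      exact ⟨0, Or.inl rfl, by rw [hr0]; simp, Or.inr hr0⟩
  have hre' : r^2 = (((e:ℚ)):ℝ) := by push_cast; exact hre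
  have hint : IsIntegral ℚ r := by
    refine ⟨Polynomial.X^2 - Polynomial.C ((e:ℚ)), Polynomial.monic_X_pow_sub_C _ two_ne_zero, ?_⟩
    simp only [Polynomial.eval₂_sub, Polynomial.eval₂_pow, Polynomial.eval₂_X, Polynomial.eval₂_C]
    rw [hre', eq_ratCast (algebraMap ℚ ℝ) ((e:ℚ))]
    ring
  have hmem : ∀ w : ℝ, w ∈ IntermediateField.adjoin ℚ {r} →
      w ∈ Algebra.adjoin ℚ ({r} : Set ℝ) := by
    intro w hw
    rw [← IntermediateField.adjoin_simple_toSubalgebra_of_isAlgebraic hint.isAlgebraic]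
    exact hw
  have rep' : ∀ w : ℝ, w ∈ IntermediateField.adjoin ℚ {r} →
      ∃ a b : ℚ, w = a + b*r ∧ (Irrational r ∨ b = 0) := by
    intro w hw
    obtain ⟨a, b, hab⟩ := rep_mem hre' (hmem w hw)
    rcases hcase with hirr | hr0
    · exact ⟨a, b, hab, Or.inl hirr⟩
    · exact ⟨a, 0, by rw [hab, hr0]; ring, Or.inr rfl⟩
  obtain ⟨a1, b1, hx1, hb1⟩ := rep' x x.2
  obtain ⟨a2, b2, hx2, hb2⟩ := rep' y y.2
  obtain ⟨a3, b3, hx3, hb3⟩ := rep' z z.2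
  have hR : (7:ℝ) = (x:ℝ)^2 + (y:ℝ)^2 + (z:ℝ)^2 := by
    have h0 : ((IntermediateField.adjoin ℚ ({r} : Set ℝ)).val) 7
        = (IntermediateField.adjoin ℚ ({r} : Set ℝ)).val (x^2+y^2+z^2) := congrArg _ hxyz
    simpa only [map_ofNat, map_add, map_pow, IntermediateField.coe_val] using h0
  rw [hx1, hx2, hx3] at hR
  have hkey : (7:ℝ) = ((a1:ℝ)^2+(a2:ℝ)^2+(a3:ℝ)^2 + (e:ℝ)*((b1:ℝ)^2+(b2:ℝ)^2+(b3:ℝ)^2))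
      + 2*((a1:ℝ)*b1+(a2:ℝ)*b2+(a3:ℝ)*b3)*r := by
    linear_combination hR + ((b1:ℝ)^2+(b2:ℝ)^2+(b3:ℝ)^2)*hre
  have hT0 : a1*b1+a2*b2+a3*b3 = 0 := by
    by_contra hT
    have hirr : Irrational r := by
      rcases hb1 with h1|h1
      · exact h1
      rcases hb2 with h2|h2
      · exact h2
      rcases hb3 with h3|h3
      · exact h3
      exact absurd (by rw [h1, h2, h3]; ring) hT
    refine hirr ⟨(7 - (a1^2+a2^2+a3^2 + e*(b1^2+b2^2+b3^2)))/(2*(a1*b1+a2*b2+a3*b3)), ?_⟩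
    have hTne : ((a1:ℝ)*b1+(a2:ℝ)*b2+(a3:ℝ)*b3) ≠ 0 := by
      intro h0
      exact hT (by exact_mod_cast h0)
    push_cast
    field_simp
    linear_combination hkey
  have hTr : (a1:ℝ)*b1+(a2:ℝ)*b2+(a3:ℝ)*b3 = 0 := by exact_mod_cast hT0
  have hS7 : (7:ℚ) = a1^2+a2^2+a3^2 + (e:ℚ)*(b1^2+b2^2+b3^2) := by
    have h7 : (7:ℝ) = (a1:ℝ)^2+(a2:ℝ)^2+(a3:ℝ)^2 + (e:ℝ)*((b1:ℝ)^2+(b2:ℝ)^2+(b3:ℝ)^2) := by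
      linear_combination hkey + 2*r*hTr
    exact_mod_cast h7
  -- clear denominators
  set N : ℕ := a1.den * a2.den * a3.den * b1.den * b2.den * b3.den with hN
  have hNne : N ≠ 0 := by
    rw [hN]
    exact Nat.pos_iff_ne_zero.mp (Nat.mul_pos (Nat.mul_pos (Nat.mul_pos (Nat.mul_pos
      (Nat.mul_pos a1.pos a2.pos) a3.pos) b1.pos) b2.pos) b3.pos)
  obtain ⟨A1, hA1⟩ := exists_int_mul (q := a1) (N := (N:ℤ))
    (by exact_mod_cast (⟨a2.den*a3.den*b1.den*b2.den*b3.den, by rw [hN]; ring⟩ : a1.den ∣ N))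
  obtain ⟨A2, hA2⟩ := exists_int_mul (q := a2) (N := (N:ℤ))
    (by exact_mod_cast (⟨a1.den*a3.den*b1.den*b2.den*b3.den, by rw [hN]; ring⟩ : a2.den ∣ N))
  obtain ⟨A3, hA3⟩ := exists_int_mul (q := a3) (N := (N:ℤ))
    (by exact_mod_cast (⟨a1.den*a2.den*b1.den*b2.den*b3.den, by rw [hN]; ring⟩ : a3.den ∣ N))
  obtain ⟨B1, hB1⟩ := exists_int_mul (q := b1) (N := (N:ℤ))
    (by exact_mod_cast (⟨a1.den*a2.den*a3.den*b2.den*b3.den, by rw [hN]; ring⟩ : b1.den ∣ N))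
  obtain ⟨B2, hB2⟩ := exists_int_mul (q := b2) (N := (N:ℤ))
    (by exact_mod_cast (⟨a1.den*a2.den*a3.den*b1.den*b3.den, by rw [hN]; ring⟩ : b2.den ∣ N))
  obtain ⟨B3, hB3⟩ := exists_int_mul (q := b3) (N := (N:ℤ))
    (by exact_mod_cast (⟨a1.den*a2.den*a3.den*b1.den*b2.den, by rw [hN]; ring⟩ : b3.den ∣ N))
  have hQ : ((7*(N:ℤ)^2 : ℤ) : ℚ) = ((A1^2+A2^2+A3^2 + e*(B1^2+B2^2+B3^2) : ℤ) : ℚ) := by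
    push_cast
    rw [hA1, hA2, hA3, hB1, hB2, hB3]
    push_cast
    linear_combination ((N:ℚ))^2 * hS7
  have hZ : 7*(N:ℤ)^2 = A1^2+A2^2+A3^2 + e*(B1^2+B2^2+B3^2) := by exact_mod_cast hQ
  have hTQ : ((A1*B1+A2*B2+A3*B3 : ℤ) : ℚ) = ((0:ℤ):ℚ) := by
    push_cast
    rw [hA1, hA2, hA3, hB1, hB2, hB3]
    push_cast
    linear_combination ((N:ℚ))^2 * hT0
  have hTZ : A1*B1+A2*B2+A3*B3 = 0 := by exact_mod_cast hTQ
  -- 2-adic descent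
  set v : ℕ := N.factorization 2 with hv
  set M : ℕ := N / 2^v with hM
  have hfac : 2^v * M = N := Nat.ordProj_mul_ordCompl_eq_self N 2
  have hM2 : ¬ (2 ∣ M) := Nat.not_dvd_ordCompl Nat.prime_two hNne
  have hMod : (M:ℤ) % 2 = 1 := by omega
  have hNint : (N:ℤ) = 2^v * (M:ℤ) := by exact_mod_cast hfac.symm
  obtain ⟨s, hs⟩ := sq_mod_pow e he8 (2*v+3)
  have h4v : (4:ℤ)^v = 2^v * 2^v := by
    rw [show (4:ℤ) = 2*2 by norm_num, mul_pow]
  have hdiff : (A1+s*B1)^2+(A2+s*B2)^2+(A3+s*B3)^2 - 7*4^v*(M:ℤ)^2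
      = (s^2 - e)*(B1^2+B2^2+B3^2) := by
    have hZ2 : 7*(4^v*(M:ℤ)^2) = A1^2+A2^2+A3^2 + e*(B1^2+B2^2+B3^2) := by
      rw [h4v]
      linear_combination hZ - 7*((N:ℤ) + 2^v*(M:ℤ))*hNint
    linear_combination 2*s*hTZ - hZ2
  refine no_three v (A1+s*B1) (A2+s*B2) (A3+s*B3) (M:ℤ) hMod ?_
  rw [hdiff]
  exact hs.mul_right _
end

section
/- Let d be a square-free integer with d ≡ 1 (mod 8) and d ≠ 1, let k = ℚ(√d) be the real quadratic field obtained by adjoining √d to ℚ inside ℝ, and let α = 7 + 8m(m+1) for some integer m ≥ 0. Then α is not a sum of three squares in k. -/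
lemma aux_mod8 : ∀ x y z : ZMod 8, x^2 + y^2 + z^2 ≠ 7 := by decide

lemma sq_mod4 (c : ℤ) : c^2 % 4 = 0 ∧ Even c ∨ c^2 % 4 = 1 := by
  rcases Int.even_or_odd c with ⟨j, rfl⟩ | ⟨j, rfl⟩
  · have : (j+j)^2 = 4*j^2 := by ring
    exact Or.inl ⟨by omega, ⟨j, rfl⟩⟩
  · have : (2*j+1)^2 = 4*(j^2+j) + 1 := by ring
    exact Or.inr (by omega)

lemma aux_descent (w : ℤ) (hw : w % 8 = 7) :
    ∀ s : ℕ, ∀ c₁ c₂ c₃ : ℤ, ¬ ((2:ℤ)^(2*s+3) ∣ c₁^2 + c₂^2 + c₃^2 - 4^s * w) := by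
  intro s
  induction s with
  | zero =>
    intro c₁ c₂ c₃ h
    simp only [pow_zero, one_mul, Nat.mul_zero, Nat.zero_add] at h
    have h8 : (8:ℤ) ∣ c₁^2 + c₂^2 + c₃^2 - w := by norm_num at h; exact h
    have hz : ((c₁ : ZMod 8))^2 + (c₂ : ZMod 8)^2 + (c₃ : ZMod 8)^2 = (w : ZMod 8) := by
      have := (ZMod.intCast_zmod_eq_zero_iff_dvd _ 8).2 h8
      push_cast at this
      linear_combination this
    have hw8 : (w : ZMod 8) = 7 := by
      have h7 : (8:ℤ) ∣ w - 7 := by omega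
      have := (ZMod.intCast_zmod_eq_zero_iff_dvd _ 8).2 h7
      push_cast at this
      linear_combination this
    rw [hw8] at hz
    exact aux_mod8 _ _ _ hz
  | succ s ih =>
    intro c₁ c₂ c₃ h
    have h4 : (c₁^2 + c₂^2 + c₃^2) % 4 = 0 := by
      have h1 : (4:ℤ) ∣ 2^(2*(s+1)+3) := ⟨2^(2*s+3), by ring⟩
      have h2 : (4:ℤ) ∣ 4^(s+1) * w := ⟨4^s * w, by ring⟩
      have := dvd_add (h1.trans h) h2
      have : (4:ℤ) ∣ c₁^2 + c₂^2 + c₃^2 := by simpa using this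
      omega
    rcases sq_mod4 c₁ with ⟨m1, ⟨d₁, rfl⟩⟩ | m1 <;>
    rcases sq_mod4 c₂ with ⟨m2, ⟨d₂, rfl⟩⟩ | m2 <;>
    rcases sq_mod4 c₃ with ⟨m3, ⟨d₃, rfl⟩⟩ | m3
    · -- all even
      apply ih d₁ d₂ d₃
      obtain ⟨M, hM⟩ := h
      refine ⟨M, ?_⟩
      have key : (4:ℤ) * (d₁^2 + d₂^2 + d₃^2 - 4^s * w) = 4 * (2^(2*s+3) * M) := by
        calc (4:ℤ) * (d₁^2 + d₂^2 + d₃^2 - 4^s * w)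
            = (d₁+d₁)^2 + (d₂+d₂)^2 + (d₃+d₃)^2 - 4^(s+1)*w := by ring
          _ = 2^(2*(s+1)+3) * M := hM
          _ = 4 * (2^(2*s+3) * M) := by ring
      have := mul_left_cancel₀ (by norm_num : (4:ℤ) ≠ 0) key
      linarith [this]
    all_goals omega

/-- square roots of d mod arbitrary powers of 2, when d ≡ 1 mod 8 or d = 0 -/
lemma aux_sqrt (d : ℤ) (hd : d % 8 = 1 ∨ d = 0) (n : ℕ) :
    ∃ t : ℤ, (2:ℤ)^(n+3) ∣ d - t^2 := by
  rcases hd with hd | rfl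
  · induction n with
    | zero => exact ⟨1, by norm_num; omega⟩
    | succ n ih =>
      obtain ⟨t, u, hu⟩ := ih
      obtain ⟨j, rfl⟩ : ∃ j, t = 2*j + 1 := by
        rcases Int.even_or_odd t with ⟨i, rfl⟩ | ⟨i, rfl⟩
        · exfalso
          have : d = 2 * (2*i^2 + 2^(n+2) * u) := by
            have h2 : ((i+i)^2 : ℤ) = 2*(2*i^2) := by ring
            have h3 : ((2:ℤ)^(n+3)) = 2 * 2^(n+2) := by ring
            linear_combination hu
          omega
        · exact ⟨i, rfl⟩
      rcases Int.even_or_odd u with ⟨v, rfl⟩ | ⟨v, rfl⟩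
      · exact ⟨2*j+1, v, by rw [hu]; ring⟩
      · refine ⟨2*j + 1 + 2^(n+2), v - j - 2^n, ?_⟩
        have : d - (2*j + 1 + 2^(n+2))^2
            = (d - (2*j+1)^2) - 2^(n+3)*(2*j+1) - 2^(n+2)*2^(n+2) := by ring
        rw [this, hu]
        ring
  · exact ⟨2^(n+3), -(2^(n+3)), by ring⟩

lemma aux_split (D : ℤ) (hD : D ≠ 0) : ∃ (s : ℕ) (E : ℤ), E % 2 = 1 ∧ D = 2^s * E := by
  have hfin : FiniteMultiplicity (2:ℤ) D :=
    Int.finiteMultiplicity_iff.mpr ⟨by norm_num, hD⟩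
  obtain ⟨E, hE, hdvd⟩ := hfin.exists_eq_pow_mul_and_not_dvd
  exact ⟨_, E, by omega, hE⟩

lemma aux_main (d : ℤ) (hd : d % 8 = 1 ∨ d = 0) (α : ℤ) (hα : α % 8 = 7)
    (a₁ a₂ a₃ b₁ b₂ b₃ D : ℤ) (hD : D ≠ 0)
    (hcross : a₁*b₁ + a₂*b₂ + a₃*b₃ = 0)
    (heq : a₁^2+a₂^2+a₃^2 + d*(b₁^2+b₂^2+b₃^2) = α * D^2) : False := by
  obtain ⟨s, E, hE, rfl⟩ := aux_split D hD
  have hEsq : E^2 % 8 = 1 := by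
    obtain ⟨j, rfl⟩ : ∃ j, E = 2*j+1 := ⟨(E-1)/2, by omega⟩
    obtain ⟨i, hi⟩ : Even (j*(j+1)) := Int.even_mul_succ_self j
    have : (2*j+1)^2 = 4*(j*(j+1)) + 1 := by ring
    omega
  have hw : (α * E^2) % 8 = 7 := by
    rw [Int.mul_emod, hα, hEsq]; norm_num
  obtain ⟨t, ht⟩ := aux_sqrt d hd (2*s)
  apply aux_descent (α * E^2) hw s (a₁ + t*b₁) (a₂ + t*b₂) (a₃ + t*b₃)
  have key : (a₁ + t*b₁)^2 + (a₂ + t*b₂)^2 + (a₃ + t*b₃)^2 - 4^s * (α * E^2)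
      = (t^2 - d) * (b₁^2+b₂^2+b₃^2) + 2*t*(a₁*b₁ + a₂*b₂ + a₃*b₃)
        + (a₁^2+a₂^2+a₃^2 + d*(b₁^2+b₂^2+b₃^2) - α * (2^s*E)^2)
        + α * ((2^s*E)^2 - 4^s * E^2) := by ring
  rw [key, hcross, heq]
  have h1 : ((2:ℤ)^s*E)^2 - 4^s * E^2 = 0 := by
    have : ((2:ℤ)^s)^2 = 4^s := by
      rw [← pow_mul, mul_comm, pow_mul]; norm_num
    rw [mul_pow, this]; ring
  rw [h1, sub_self]
  simp only [mul_zero, add_zero, zero_add]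
  exact Dvd.dvd.mul_right (by simpa using (dvd_neg.mpr ht)) _

lemma rat_mul_int (q : ℚ) (n : ℤ) (h : (q.den : ℤ) ∣ n) : ∃ a : ℤ, (a:ℚ) = q * n := by
  obtain ⟨c, rfl⟩ := h
  refine ⟨q.num * c, ?_⟩
  have hq : (q.num : ℚ) = q * (q.den : ℚ) := by
    have h0 : ((q.den:ℚ)) ≠ 0 := by exact_mod_cast q.den_ne_zero
    have h1 := Rat.num_div_den q
    rw [div_eq_iff h0] at h1
    exact h1
  push_cast
  rw [hq]
  ring

/-- If `d ≡ 1 (mod 8)` is a square-free integer, `d ≠ 1`, and `α = 7 + 8m(m+1)` with `m ≥ 0`,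
then `α` is not a sum of three squares in the real quadratic field `k = ℚ(√d)`. -/
theorem not_sum_three_squares_real_quadratic'
    (d : ℤ) (hsf : Squarefree d) (hd : d % 8 = 1) (hd1 : d ≠ 1)
    (k : IntermediateField ℚ ℝ) (hk : k = IntermediateField.adjoin ℚ {Real.sqrt d})
    (m : ℕ) (α : ℕ) (hα : α = 7 + 8 * m * (m + 1)) :
    ¬ ∃ x y z : k, (α : k) = x ^ 2 + y ^ 2 + z ^ 2 := by
  subst hk
  set s : ℝ := Real.sqrt d with hs
  set d' : ℤ := if 0 ≤ d then d else 0 with hd'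
  rintro ⟨x, y, z, hxyz⟩
  have hsq : s^2 = (d' : ℝ) := by
    by_cases h : 0 ≤ d
    · simp only [hd', if_pos h]
      rw [hs, sq, Real.mul_self_sqrt (by exact_mod_cast h)]
    · simp only [hd', if_neg h]
      rw [hs, Real.sqrt_eq_zero_of_nonpos (by exact_mod_cast (not_le.mp h).le)]
      norm_num
  have hd'8 : d' % 8 = 1 ∨ d' = 0 := by
    by_cases h : 0 ≤ d
    · left; simp only [hd', if_pos h]; exact hd
    · right; simp only [hd', if_neg h]
  -- every element of the adjoin is u + v * s
  have hrep : ∀ w : ℝ, w ∈ IntermediateField.adjoin ℚ {s} → ∃ u v : ℚ, w = u + v * s := by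
    intro w hw
    have halg : ∀ w ∈ ({s} : Set ℝ), IsAlgebraic ℚ w := by
      rintro w hw
      rw [Set.mem_singleton_iff] at hw; subst hw
      refine ⟨Polynomial.X^2 - Polynomial.C ((d':ℚ)), Polynomial.X_pow_sub_C_ne_zero (by norm_num) _, ?_⟩
      simp only [map_sub, Polynomial.aeval_X_pow, Polynomial.aeval_C]
      rw [hsq]
      simp [Rat.cast_intCast]
    have hw' : w ∈ Algebra.adjoin ℚ ({s} : Set ℝ) := by
      rw [← IntermediateField.adjoin_toSubalgebra_of_isAlgebraic halg]
      exact hw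
    clear hw
    induction hw' using Algebra.adjoin_induction with
    | mem a ha =>
      rw [Set.mem_singleton_iff] at ha
      exact ⟨0, 1, by rw [ha]; push_cast; ring⟩
    | algebraMap r => exact ⟨r, 0, by simp⟩
    | add a b _ _ ha hb =>
      obtain ⟨u, v, rfl⟩ := ha
      obtain ⟨u', v', rfl⟩ := hb
      exact ⟨u + u', v + v', by push_cast; ring⟩
    | mul a b _ _ ha hb =>
      obtain ⟨u, v, rfl⟩ := ha
      obtain ⟨u', v', rfl⟩ := hb
      refine ⟨u*u' + d'*(v*v'), u*v' + u'*v, ?_⟩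
      have h2 : ((u:ℝ) + v*s)*((u':ℝ)+v'*s)
          = u*u' + (v*v')*s^2 + (((u:ℝ)*v' + (u':ℝ)*v))*s := by ring
      rw [h2, hsq]
      push_cast
      ring
  -- the equation in ℝ
  have hR : ((α:ℕ):ℝ) = (x:ℝ)^2 + (y:ℝ)^2 + (z:ℝ)^2 := by
    exact_mod_cast congrArg (fun t : IntermediateField.adjoin ℚ {s} => (t:ℝ)) hxyz
  -- representations, with irrationality or triviality of s
  obtain ⟨u₁, v₁, u₂, v₂, u₃, v₃, hx1, hx2, hx3, hcase⟩ :
      ∃ u₁ v₁ u₂ v₂ u₃ v₃ : ℚ, (x:ℝ) = u₁ + v₁*s ∧ (y:ℝ) = u₂ + v₂*s ∧ (z:ℝ) = u₃ + v₃*s ∧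
        (Irrational s ∨ (v₁ = 0 ∧ v₂ = 0 ∧ v₃ = 0)) := by
    obtain ⟨u₁, v₁, h1⟩ := hrep x x.2
    obtain ⟨u₂, v₂, h2⟩ := hrep y y.2
    obtain ⟨u₃, v₃, h3⟩ := hrep z z.2
    by_cases h0 : 0 ≤ d
    · refine ⟨u₁, v₁, u₂, v₂, u₃, v₃, h1, h2, h3, Or.inl ?_⟩
      rw [hs]
      refine (irrational_sqrt_intCast_iff_of_nonneg h0).mpr ?_
      rintro ⟨r, hr⟩
      have hdvd : r * r ∣ d := ⟨1, by rw [hr]; ring⟩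
      rcases Int.isUnit_iff.mp (hsf r hdvd) with rfl | rfl <;> norm_num at hr <;> exact hd1 hr
    · have hs0 : s = 0 := by
        rw [hs, Real.sqrt_eq_zero_of_nonpos (by exact_mod_cast (not_le.mp h0).le)]
      refine ⟨u₁, 0, u₂, 0, u₃, 0, ?_, ?_, ?_, Or.inr ⟨rfl, rfl, rfl⟩⟩ <;>
        [rw [h1, hs0]; rw [h2, hs0]; rw [h3, hs0]] <;> push_cast <;> ring
  rw [hx1, hx2, hx3] at hR
  -- separate rational and irrational parts
  have key : ((α:ℕ):ℝ) = ((u₁^2+u₂^2+u₃^2 + (d':ℚ)*(v₁^2+v₂^2+v₃^2) : ℚ) : ℝ)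
      + ((2*(u₁*v₁+u₂*v₂+u₃*v₃) : ℚ) : ℝ) * s := by
    rw [hR]
    push_cast
    linear_combination ((v₁:ℝ)^2 + (v₂:ℝ)^2 + (v₃:ℝ)^2) * hsq
  have hB0 : (u₁*v₁+u₂*v₂+u₃*v₃ : ℚ) = 0 := by
    rcases hcase with hirr | ⟨rfl, rfl, rfl⟩
    · by_contra hB
      apply hirr
      refine ⟨(((α:ℕ):ℚ) - (u₁^2+u₂^2+u₃^2 + (d':ℚ)*(v₁^2+v₂^2+v₃^2))) / (2*(u₁*v₁+u₂*v₂+u₃*v₃)), ?_⟩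
      have h2B : ((2*(u₁*v₁+u₂*v₂+u₃*v₃) : ℚ) : ℝ) ≠ 0 := by
        exact_mod_cast mul_ne_zero two_ne_zero hB
      push_cast
      push_cast at key h2B
      field_simp
      rw [div_eq_iff (by intro h; apply h2B; rw [h]; ring)]
      linarith [key]
    · ring
  have hA : (u₁^2+u₂^2+u₃^2 + (d':ℚ)*(v₁^2+v₂^2+v₃^2) : ℚ) = ((α:ℕ):ℚ) := by
    rw [hB0] at key
    norm_num at key
    exact_mod_cast key.symm
  -- clear denominators
  set D : ℤ := (u₁.den:ℤ)*(u₂.den:ℤ)*(u₃.den:ℤ)*(v₁.den:ℤ)*(v₂.den:ℤ)*(v₃.den:ℤ) with hD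
  have hDne : D ≠ 0 := by
    rw [hD]
    positivity
  obtain ⟨a₁, ha₁⟩ := rat_mul_int u₁ D ⟨(u₂.den:ℤ)*(u₃.den:ℤ)*(v₁.den:ℤ)*(v₂.den:ℤ)*(v₃.den:ℤ), by rw [hD]; ring⟩
  obtain ⟨a₂, ha₂⟩ := rat_mul_int u₂ D ⟨(u₁.den:ℤ)*(u₃.den:ℤ)*(v₁.den:ℤ)*(v₂.den:ℤ)*(v₃.den:ℤ), by rw [hD]; ring⟩
  obtain ⟨a₃, ha₃⟩ := rat_mul_int u₃ D ⟨(u₁.den:ℤ)*(u₂.den:ℤ)*(v₁.den:ℤ)*(v₂.den:ℤ)*(v₃.den:ℤ), by rw [hD]; ring⟩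
  obtain ⟨b₁, hb₁⟩ := rat_mul_int v₁ D ⟨(u₁.den:ℤ)*(u₂.den:ℤ)*(u₃.den:ℤ)*(v₂.den:ℤ)*(v₃.den:ℤ), by rw [hD]; ring⟩
  obtain ⟨b₂, hb₂⟩ := rat_mul_int v₂ D ⟨(u₁.den:ℤ)*(u₂.den:ℤ)*(u₃.den:ℤ)*(v₁.den:ℤ)*(v₃.den:ℤ), by rw [hD]; ring⟩
  obtain ⟨b₃, hb₃⟩ := rat_mul_int v₃ D ⟨(u₁.den:ℤ)*(u₂.den:ℤ)*(u₃.den:ℤ)*(v₁.den:ℤ)*(v₂.den:ℤ), by rw [hD]; ring⟩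
  have heqZ : a₁^2+a₂^2+a₃^2 + d'*(b₁^2+b₂^2+b₃^2) = (α:ℤ) * D^2 := by
    have h9 : (a₁:ℚ)^2+(a₂:ℚ)^2+(a₃:ℚ)^2 + (d':ℚ)*((b₁:ℚ)^2+(b₂:ℚ)^2+(b₃:ℚ)^2)
        = ((α:ℕ):ℚ) * (D:ℚ)^2 := by
      rw [ha₁, ha₂, ha₃, hb₁, hb₂, hb₃]
      linear_combination (D:ℚ)^2 * hA
    exact_mod_cast h9
  have hcrossZ : a₁*b₁+a₂*b₂+a₃*b₃ = 0 := by
    have h9 : (a₁:ℚ)*(b₁:ℚ)+(a₂:ℚ)*(b₂:ℚ)+(a₃:ℚ)*(b₃:ℚ) = 0 := by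
      rw [ha₁, ha₂, ha₃, hb₁, hb₂, hb₃]
      linear_combination (D:ℚ)^2 * hB0
    exact_mod_cast h9
  have hα8 : (α:ℤ) % 8 = 7 := by
    subst hα
    have h9 : ((7 + 8 * m * (m + 1) : ℕ) : ℤ) = 7 + 8 * (m*(m+1)) := by push_cast; ring
    rw [h9, Int.add_mul_emod_self_left]
    norm_num
  exact aux_main d' hd'8 (α:ℤ) hα8 a₁ a₂ a₃ b₁ b₂ b₃ D hDne hcrossZ heqZ
end

section
/- The quadratic form ⟨1,1,1,−7⟩ is anisotropic over the field ℚ₂ of 2-adic numbers: if x, y, z, w ∈ ℚ₂ satisfy x² + y² + z² = 7w², then x = y = z = w = 0. -/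
lemma mod8_aux : ∀ A B C D : ZMod (2^3), A^2+B^2+C^2 = 7*D^2 →
    ¬((∃ E, A*E=1) ∨ (∃ E, B*E=1) ∨ (∃ E, C*E=1) ∨ (∃ E, D*E=1)) := by decide

lemma keyInt (a b c d : ℤ_[2]) (h : a^2+b^2+c^2 = 7*d^2)
    (hu : ‖a‖ = 1 ∨ ‖b‖ = 1 ∨ ‖c‖ = 1 ∨ ‖d‖ = 1) : False := by
  set f := PadicInt.toZModPow (p := 2) 3 with hf
  have he : (f a)^2 + (f b)^2 + (f c)^2 = 7 * (f d)^2 := by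
    have := congrArg f h
    simpa only [map_add, map_mul, map_pow, map_ofNat] using this
  refine mod8_aux _ _ _ _ he ?_
  have key : ∀ z : ℤ_[2], ‖z‖ = 1 → ∃ E, f z * E = 1 := by
    intro z hz
    obtain ⟨u, hu'⟩ := PadicInt.isUnit_iff.mpr hz
    exact ⟨f ((u⁻¹ : ℤ_[2]ˣ) : ℤ_[2]), by rw [← map_mul, ← hu', Units.mul_inv, map_one]⟩
  rcases hu with h|h|h|h
  · exact Or.inl (key _ h)
  · exact Or.inr (Or.inl (key _ h))
  · exact Or.inr (Or.inr (Or.inl (key _ h)))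
  · exact Or.inr (Or.inr (Or.inr (key _ h)))

lemma scaled (x y z w : ℚ_[2]) (h : x ^ 2 + y ^ 2 + z ^ 2 = 7 * w ^ 2)
    (u : ℚ_[2]) (hu : u ≠ 0)
    (hmx : ‖x‖ ≤ ‖u‖) (hmy : ‖y‖ ≤ ‖u‖) (hmz : ‖z‖ ≤ ‖u‖) (hmw : ‖w‖ ≤ ‖u‖)
    (hmem : ‖u‖ = ‖x‖ ∨ ‖u‖ = ‖y‖ ∨ ‖u‖ = ‖z‖ ∨ ‖u‖ = ‖w‖) : False := by
  set v := u.valuation with hv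
  set t : ℚ_[2] := (2 : ℚ_[2]) ^ (-v) with htdef
  have h2c : ((2:ℕ):ℚ_[2]) = 2 := by exact_mod_cast rfl
  have hnt : ‖t‖ = (2:ℝ) ^ v := by
    rw [htdef, ← h2c, Padic.norm_p_zpow]
    norm_num
  have hnu : ‖u‖ = (2:ℝ) ^ (-v) := by
    have := Padic.norm_eq_zpow_neg_valuation (p := 2) hu
    simpa using this
  have h1 : ‖t‖ * ‖u‖ = 1 := by
    rw [hnt, hnu, ← zpow_add₀ (by norm_num : (2:ℝ) ≠ 0)]
    simp
  have ht : ∀ a : ℚ_[2], ‖a‖ ≤ ‖u‖ → ‖t * a‖ ≤ 1 := by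
    intro a ha
    rw [norm_mul]
    calc ‖t‖ * ‖a‖ ≤ ‖t‖ * ‖u‖ := mul_le_mul_of_nonneg_left ha (norm_nonneg t)
      _ = 1 := h1
  set A : ℤ_[2] := ⟨t * x, ht x hmx⟩ with hA
  set B : ℤ_[2] := ⟨t * y, ht y hmy⟩ with hB
  set C : ℤ_[2] := ⟨t * z, ht z hmz⟩ with hC
  set D : ℤ_[2] := ⟨t * w, ht w hmw⟩ with hD
  have heq : A^2 + B^2 + C^2 = 7 * D^2 := by
    apply Subtype.ext
    have h7 : ((7:ℤ_[2]):ℚ_[2]) = 7 := by exact_mod_cast rfl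
    show (t*x)^2 + (t*y)^2 + (t*z)^2 = ((7:ℤ_[2]):ℚ_[2]) * (t*w)^2
    push_cast [hA, hB, hC, hD, h7]
    linear_combination t^2 * h
  refine keyInt A B C D heq ?_
  have hn : ∀ a : ℚ_[2], ‖u‖ = ‖a‖ → ‖t * a‖ = 1 := by
    intro a ha; rw [norm_mul, ← ha, h1]
  rcases hmem with h'|h'|h'|h'
  · exact Or.inl (by rw [PadicInt.norm_def]; exact hn x h')
  · exact Or.inr (Or.inl (by rw [PadicInt.norm_def]; exact hn y h'))
  · exact Or.inr (Or.inr (Or.inl (by rw [PadicInt.norm_def]; exact hn z h')))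
  · exact Or.inr (Or.inr (Or.inr (by rw [PadicInt.norm_def]; exact hn w h')))

/-- The quadratic form `⟨1,1,1,-7⟩` is anisotropic over the `2`-adic numbers `ℚ₂`. -/
theorem anisotropic_padic_two (x y z w : ℚ_[2])
    (h : x ^ 2 + y ^ 2 + z ^ 2 = 7 * w ^ 2) : x = 0 ∧ y = 0 ∧ z = 0 ∧ w = 0 := by
  set r := max (max ‖x‖ ‖y‖) (max ‖z‖ ‖w‖) with hr
  have hx : ‖x‖ ≤ r := le_max_of_le_left (le_max_left _ _)
  have hy : ‖y‖ ≤ r := le_max_of_le_left (le_max_right _ _)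
  have hz : ‖z‖ ≤ r := le_max_of_le_right (le_max_left _ _)
  have hw : ‖w‖ ≤ r := le_max_of_le_right (le_max_right _ _)
  have hcases : r = ‖x‖ ∨ r = ‖y‖ ∨ r = ‖z‖ ∨ r = ‖w‖ := by
    rcases max_choice (max ‖x‖ ‖y‖) (max ‖z‖ ‖w‖) with h1 | h1
    · rcases max_choice ‖x‖ ‖y‖ with h2 | h2
      · left; rw [hr, h1, h2]
      · right; left; rw [hr, h1, h2]
    · rcases max_choice ‖z‖ ‖w‖ with h2 | h2
      · right; right; left; rw [hr, h1, h2]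
      · right; right; right; rw [hr, h1, h2]
  by_cases h0 : r = 0
  · refine ⟨?_, ?_, ?_, ?_⟩ <;> rw [← norm_eq_zero] <;>
      [exact le_antisymm (h0 ▸ hx) (norm_nonneg _);
       exact le_antisymm (h0 ▸ hy) (norm_nonneg _);
       exact le_antisymm (h0 ▸ hz) (norm_nonneg _);
       exact le_antisymm (h0 ▸ hw) (norm_nonneg _)]
  · exfalso
    rcases hcases with h'|h'|h'|h'
    · exact scaled x y z w h x (fun hh => h0 (by rw [h', hh, norm_zero]))
        (h' ▸ hx) (h' ▸ hy) (h' ▸ hz) (h' ▸ hw) (Or.inl rfl)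
    · exact scaled x y z w h y (fun hh => h0 (by rw [h', hh, norm_zero]))
        (h' ▸ hx) (h' ▸ hy) (h' ▸ hz) (h' ▸ hw) (Or.inr (Or.inl rfl))
    · exact scaled x y z w h z (fun hh => h0 (by rw [h', hh, norm_zero]))
        (h' ▸ hx) (h' ▸ hy) (h' ▸ hz) (h' ▸ hw) (Or.inr (Or.inr (Or.inl rfl)))
    · exact scaled x y z w h w (fun hh => h0 (by rw [h', hh, norm_zero]))
        (h' ▸ hx) (h' ▸ hy) (h' ▸ hz) (h' ▸ hw) (Or.inr (Or.inr (Or.inr rfl)))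
end

section
/- Let d be a square-free positive integer of the form d = 7 + 8m for some integer m ≥ 0, and let k = ℚ(√−d) be the imaginary quadratic field obtained by adjoining to ℚ a complex number z with z² = −d. Then the level of k is 4: −1 is a sum of four squares in k, but −1 is not a sum of three squares in k. -/
/-- If `8 ∣ d+1` then `-d` is a square modulo `2^(n+3)` for every `n`, with an odd square root. -/
lemma aux_sqrt_two_adic (d : ℤ) (hd : (8:ℤ) ∣ d + 1) :
    ∀ n : ℕ, ∃ w : ℤ, w % 2 = 1 ∧ (2:ℤ)^(n+3) ∣ w^2 + d := by
  intro n
  induction n with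
  | zero => exact ⟨1, rfl, by simpa [add_comm] using hd⟩
  | succ n ih =>
    obtain ⟨w, hodd, t, ht⟩ := ih
    obtain ⟨c, hc⟩ : ∃ c, w = 2*c+1 := ⟨(w-1)/2, by omega⟩
    rcases Int.even_or_odd t with ⟨u, hu⟩ | ⟨u, hu⟩
    · exact ⟨w, hodd, u, by linear_combination ht + 2^(n+3) * (by omega : t = 2*u)⟩
    · have hpow : (2:ℤ)^(n+2) = 2 * 2^(n+1) := by ring
      refine ⟨w + 2^(n+2), by omega, u + c + 1 + 2^n, ?_⟩
      linear_combination ht + 2^(n+3) * (by omega : t + w = 2*(u+c+1))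

/-- If a sum of four integer squares is divisible by 8, all four integers are even. -/
lemma aux_mod8_s16 (y₁ y₂ y₃ y₄ : ℤ) (h8 : (8:ℤ) ∣ y₁^2+y₂^2+y₃^2+y₄^2) :
    (2:ℤ) ∣ y₁ ∧ (2:ℤ) ∣ y₂ ∧ (2:ℤ) ∣ y₃ ∧ (2:ℤ) ∣ y₄ := by
  have key : ∀ a b c e : ZMod 8, a^2+b^2+c^2+e^2 = 0 →
      (ZMod.castHom (by norm_num : (2:ℕ) ∣ 8) (ZMod 2) a = 0 ∧
       ZMod.castHom (by norm_num : (2:ℕ) ∣ 8) (ZMod 2) b = 0 ∧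
       ZMod.castHom (by norm_num : (2:ℕ) ∣ 8) (ZMod 2) c = 0 ∧
       ZMod.castHom (by norm_num : (2:ℕ) ∣ 8) (ZMod 2) e = 0) := by decide
  have h0 : ((y₁^2+y₂^2+y₃^2+y₄^2 : ℤ) : ZMod 8) = 0 :=
    (ZMod.intCast_zmod_eq_zero_iff_dvd _ 8).2 (by exact_mod_cast h8)
  push_cast at h0
  obtain ⟨h1, h2, h3, h4⟩ := key _ _ _ _ h0
  rw [map_intCast] at h1 h2 h3 h4
  exact ⟨by exact_mod_cast (ZMod.intCast_zmod_eq_zero_iff_dvd _ 2).1 h1,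
    by exact_mod_cast (ZMod.intCast_zmod_eq_zero_iff_dvd _ 2).1 h2,
    by exact_mod_cast (ZMod.intCast_zmod_eq_zero_iff_dvd _ 2).1 h3,
    by exact_mod_cast (ZMod.intCast_zmod_eq_zero_iff_dvd _ 2).1 h4⟩

/-- The key integral obstruction: if `d ≡ 7 (mod 8)` there is no integral solution of
`p₁²+p₂²+p₃²+q² = d(r₁²+r₂²+r₃²)`, `p·r = 0` with `q ≠ 0`. -/
lemma aux_no_three_int (d : ℤ) (hd8 : (8:ℤ) ∣ d + 1)
    (p₁ p₂ p₃ q r₁ r₂ r₃ : ℤ) (hq : q ≠ 0)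
    (h1 : p₁^2+p₂^2+p₃^2 + q^2 = d * (r₁^2+r₂^2+r₃^2))
    (h2 : p₁*r₁+p₂*r₂+p₃*r₃ = 0) : False := by
  obtain ⟨w, -, hw⟩ := aux_sqrt_two_adic d hd8 (2 * q.natAbs)
  set N := 2 * q.natAbs + 3 with hN
  set x₁ := p₁ + r₁ * w with hx₁
  set x₂ := p₂ + r₂ * w with hx₂
  set x₃ := p₃ + r₃ * w with hx₃
  have hX : x₁^2 + x₂^2 + x₃^2 + q^2 = (w^2 + d) * (r₁^2+r₂^2+r₃^2) := by
    rw [hx₁, hx₂, hx₃]; linear_combination h1 + 2*w*h2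
  have hdvdX : (2:ℤ)^N ∣ x₁^2 + x₂^2 + x₃^2 + q^2 := hX ▸ hw.mul_right _
  set g : ℕ := Int.gcd x₁ (Int.gcd x₂ (Int.gcd x₃ q)) with hgdef
  have hgq : (g:ℤ) ∣ q := (Int.gcd_dvd_right _ _).trans ((Int.gcd_dvd_right _ _).trans (Int.gcd_dvd_right _ _))
  have hg1 : (g:ℤ) ∣ x₁ := Int.gcd_dvd_left _ _
  have hg2 : (g:ℤ) ∣ x₂ := (Int.gcd_dvd_right _ _).trans (Int.gcd_dvd_left _ _)
  have hg3 : (g:ℤ) ∣ x₃ := (Int.gcd_dvd_right _ _).trans ((Int.gcd_dvd_right _ _).trans (Int.gcd_dvd_left _ _))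
  have hg0 : g ≠ 0 := by
    intro h
    rw [h] at hgq
    exact hq (by simpa using hgq)
  set s := g.factorization 2 with hs
  have hps : (2:ℕ)^s ∣ g := Nat.ordProj_dvd g 2
  have hsle : s ≤ q.natAbs := by
    have h2g : (2:ℕ)^s ≤ g := Nat.le_of_dvd (Nat.pos_of_ne_zero hg0) hps
    have hgq' : g ∣ q.natAbs := by
      rwa [Int.natCast_dvd_natCast.symm, Int.dvd_natAbs]
    have : g ≤ q.natAbs := Nat.le_of_dvd (by simpa using hq) hgq'
    have := Nat.lt_two_pow_self (n := s)
    omega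
  have hpsz : ((2:ℤ))^s ∣ (g:ℤ) := by exact_mod_cast Int.natCast_dvd_natCast.2 hps
  obtain ⟨y₁, hy₁⟩ := hpsz.trans hg1
  obtain ⟨y₂, hy₂⟩ := hpsz.trans hg2
  obtain ⟨y₃, hy₃⟩ := hpsz.trans hg3
  obtain ⟨y₄, hy₄⟩ := hpsz.trans hgq
  have hYX : x₁^2 + x₂^2 + x₃^2 + q^2 = (2:ℤ)^(2*s) * (y₁^2+y₂^2+y₃^2+y₄^2) := by
    rw [hy₁, hy₂, hy₃, hy₄]; ring
  have h8Y : (8:ℤ) ∣ y₁^2+y₂^2+y₃^2+y₄^2 := by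
    obtain ⟨c, hc⟩ := hdvdX
    rw [hYX] at hc
    have hNe : N = 2*s + ((N - 2*s - 3) + 3) := by omega
    have hpow : (2:ℤ)^N = 2^(2*s) * (2^(N - 2*s - 3) * 8) := by
      rw [hNe, pow_add, pow_add]; norm_num
    rw [hpow, mul_assoc] at hc
    have := mul_left_cancel₀ (by positivity : ((2:ℤ)^(2*s)) ≠ 0) hc
    exact ⟨2^(N - 2*s - 3) * c, by rw [this]; ring⟩
  obtain ⟨e₁, e₂, e₃, e₄⟩ := aux_mod8_s16 _ _ _ _ h8Y
  have hdall : ((2:ℤ))^(s+1) ∣ (g:ℤ) := by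
    refine Int.dvd_coe_gcd ?_ (Int.dvd_coe_gcd ?_ (Int.dvd_coe_gcd ?_ ?_)) <;>
      [rw [hy₁]; rw [hy₂]; rw [hy₃]; rw [hy₄]] <;>
      rw [pow_succ] <;> [exact mul_dvd_mul_left _ e₁; exact mul_dvd_mul_left _ e₂;
        exact mul_dvd_mul_left _ e₃; exact mul_dvd_mul_left _ e₄]
  have : (2:ℕ)^(s+1) ∣ g := by exact_mod_cast hdall
  exact Nat.pow_succ_factorization_not_dvd hg0 Nat.prime_two this

lemma aux_im_ne (d : ℕ) (hd7 : 7 ≤ d) (z : ℂ) (hz : z ^ 2 = -(d : ℂ)) : z.im ≠ 0 := by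
  intro h
  have h1 := congrArg Complex.re hz
  simp [pow_two, Complex.mul_re, h] at h1
  have : (7:ℝ) ≤ (d:ℝ) := by exact_mod_cast hd7
  nlinarith [sq_nonneg z.re]

lemma aux_indep (z : ℂ) (him : z.im ≠ 0) (A B : ℚ) (h : (A:ℂ) + (B:ℂ) * z = 0) :
    A = 0 ∧ B = 0 := by
  have hIm := congrArg Complex.im h
  simp [Complex.add_im, Complex.mul_im] at hIm
  have hB : B = 0 := by tauto
  subst hB
  simp at h
  exact ⟨by exact_mod_cast h, rfl⟩

/-- Every element of `ℚ(√-d)` has the form `a + b√-d` with `a, b ∈ ℚ`. -/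
lemma aux_mem_adjoin (d : ℕ) (hd7 : 7 ≤ d) (z : ℂ) (hz : z ^ 2 = -(d : ℂ))
    (x : ℂ) (hx : x ∈ IntermediateField.adjoin ℚ {z}) : ∃ a b : ℚ, x = a + b * z := by
  have him := aux_im_ne d hd7 z hz
  set S : Subalgebra ℚ ℂ :=
    { carrier := {w | ∃ a b : ℚ, w = a + b * z}
      add_mem' := by
        rintro u v ⟨a, b, rfl⟩ ⟨c, e, rfl⟩
        exact ⟨a + c, b + e, by push_cast; ring⟩
      mul_mem' := by
        rintro u v ⟨a, b, rfl⟩ ⟨c, e, rfl⟩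
        refine ⟨a * c - d * (b * e), a * e + b * c, ?_⟩
        push_cast
        linear_combination (b * e : ℂ) * hz
      algebraMap_mem' := fun a => ⟨a, 0, by simp⟩ } with hS
  have hinv : ∀ w ∈ S, w⁻¹ ∈ S := by
    rintro w ⟨a, b, rfl⟩
    by_cases hab : a = 0 ∧ b = 0
    · obtain ⟨rfl, rfl⟩ := hab
      exact ⟨0, 0, by simp⟩
    · set n : ℚ := a ^ 2 + d * b ^ 2 with hn
      have hd0 : (0:ℚ) < d := by
        have : (7:ℚ) ≤ d := by exact_mod_cast hd7
        linarith
      have hnne : n ≠ 0 := by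
        intro h0
        have ha2 : a ^ 2 = 0 := le_antisymm (by nlinarith [sq_nonneg b]) (sq_nonneg a)
        have hb2 : b ^ 2 = 0 := by nlinarith [sq_nonneg a, sq_nonneg b]
        exact hab ⟨by simpa using pow_eq_zero_iff (n := 2) (by norm_num) |>.1 ha2,
          by simpa using pow_eq_zero_iff (n := 2) (by norm_num) |>.1 hb2⟩
      refine ⟨a / n, -b / n, ?_⟩
      have hnC : (n:ℂ) ≠ 0 := by exact_mod_cast hnne
      refine inv_eq_of_mul_eq_one_right ?_
      have hncast : (n:ℂ) = (a:ℂ)^2 + (d:ℂ)*(b:ℂ)^2 := by rw [hn]; push_cast; ring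
      push_cast
      field_simp
      linear_combination -(b:ℂ)^2 * hz - hncast
  have hle : IntermediateField.adjoin ℚ {z} ≤ S.toIntermediateField hinv := by
    rw [IntermediateField.adjoin_le_iff]
    rintro w rfl
    exact ⟨0, 1, by push_cast; ring⟩
  exact hle hx

lemma aux_den_clear (c : ℚ) (e : ℤ) (h : (c.den : ℤ) ∣ e) : ∃ p : ℤ, (p:ℚ) = c * e := by
  obtain ⟨t, rfl⟩ := h
  refine ⟨c.num * t, ?_⟩
  have h1 := Rat.mul_den_eq_num c
  push_cast
  linear_combination -(t:ℚ) * h1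

/-- If `d = 7 + 8m` is a square-free positive integer and `k = ℚ(√-d) ⊆ ℂ` is the imaginary
quadratic field generated by a square root `z` of `-d`, then the level of `k` is `4`:
`-1` is a sum of four squares in `k` but not a sum of three squares in `k`. -/
theorem level_four_imaginary_quadratic
    (d : ℕ) (hsf : Squarefree d) (m : ℕ) (hd : d = 7 + 8 * m)
    (z : ℂ) (hz : z ^ 2 = -(d : ℂ))
    (k : IntermediateField ℚ ℂ) (hk : k = IntermediateField.adjoin ℚ {z}) :
    (∃ x₁ x₂ x₃ x₄ : k, (-1 : k) = x₁ ^ 2 + x₂ ^ 2 + x₃ ^ 2 + x₄ ^ 2) ∧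
      ¬ ∃ x₁ x₂ x₃ : k, (-1 : k) = x₁ ^ 2 + x₂ ^ 2 + x₃ ^ 2 := by
  have hd7 : 7 ≤ d := by omega
  have hdC : (d:ℂ) ≠ 0 := Nat.cast_ne_zero.2 (by omega)
  have hzk : z ∈ k := by
    rw [hk]; exact IntermediateField.mem_adjoin_simple_self ℚ z
  have him := aux_im_ne d hd7 z hz
  constructor
  · -- sum of four squares
    obtain ⟨a₁, a₂, a₃, a₄, hsum⟩ := Nat.sum_four_squares d
    have hmem : ∀ a : ℕ, (a:ℂ) * z / (d:ℂ) ∈ k := fun a =>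
      div_mem (mul_mem (natCast_mem k a) hzk) (natCast_mem k d)
    refine ⟨⟨_, hmem a₁⟩, ⟨_, hmem a₂⟩, ⟨_, hmem a₃⟩, ⟨_, hmem a₄⟩, ?_⟩
    apply Subtype.coe_injective
    push_cast
    have hs4 : ((a₁:ℂ)^2+(a₂:ℂ)^2+(a₃:ℂ)^2+(a₄:ℂ)^2) = (d:ℂ) := by exact_mod_cast hsum
    field_simp
    linear_combination (d:ℂ) * hs4 - ((a₁:ℂ)^2+(a₂:ℂ)^2+(a₃:ℂ)^2+(a₄:ℂ)^2) * hz
  · -- not a sum of three squares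
    rintro ⟨x₁, x₂, x₃, hsum3⟩
    have hC : (-1:ℂ) = (x₁:ℂ)^2 + (x₂:ℂ)^2 + (x₃:ℂ)^2 := by
      have := congrArg (fun t : k => (t : ℂ)) hsum3
      push_cast at this
      exact this
    obtain ⟨a₁, b₁, he₁⟩ := aux_mem_adjoin d hd7 z hz x₁ (hk ▸ x₁.2)
    obtain ⟨a₂, b₂, he₂⟩ := aux_mem_adjoin d hd7 z hz x₂ (hk ▸ x₂.2)
    obtain ⟨a₃, b₃, he₃⟩ := aux_mem_adjoin d hd7 z hz x₃ (hk ▸ x₃.2)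
    rw [he₁, he₂, he₃] at hC
    set A : ℚ := a₁^2+a₂^2+a₃^2 + 1 - (d:ℚ)*(b₁^2+b₂^2+b₃^2) with hA
    set B : ℚ := 2*(a₁*b₁+a₂*b₂+a₃*b₃) with hB
    have key : (A:ℂ) + (B:ℂ) * z = 0 := by
      rw [hA, hB]
      push_cast
      linear_combination -hC - ((b₁:ℂ)^2+(b₂:ℂ)^2+(b₃:ℂ)^2) * hz
    obtain ⟨hA0, hB0⟩ := aux_indep z him A B key
    have hAq : a₁^2+a₂^2+a₃^2 + 1 = (d:ℚ)*(b₁^2+b₂^2+b₃^2) := by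
      rw [hA] at hA0; linarith
    have hBq : a₁*b₁+a₂*b₂+a₃*b₃ = 0 := by
      rw [hB] at hB0; linarith
    set D : ℤ := (a₁.den:ℤ) * a₂.den * a₃.den * b₁.den * b₂.den * b₃.den with hD
    have hD0 : D ≠ 0 := by
      rw [hD]
      positivity
    obtain ⟨p₁, hp₁⟩ := aux_den_clear a₁ D ⟨(a₂.den:ℤ)*a₃.den*b₁.den*b₂.den*b₃.den, by rw [hD]; ring⟩
    obtain ⟨p₂, hp₂⟩ := aux_den_clear a₂ D ⟨(a₁.den:ℤ)*a₃.den*b₁.den*b₂.den*b₃.den, by rw [hD]; ring⟩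
    obtain ⟨p₃, hp₃⟩ := aux_den_clear a₃ D ⟨(a₁.den:ℤ)*a₂.den*b₁.den*b₂.den*b₃.den, by rw [hD]; ring⟩
    obtain ⟨r₁, hr₁⟩ := aux_den_clear b₁ D ⟨(a₁.den:ℤ)*a₂.den*a₃.den*b₂.den*b₃.den, by rw [hD]; ring⟩
    obtain ⟨r₂, hr₂⟩ := aux_den_clear b₂ D ⟨(a₁.den:ℤ)*a₂.den*a₃.den*b₁.den*b₃.den, by rw [hD]; ring⟩
    obtain ⟨r₃, hr₃⟩ := aux_den_clear b₃ D ⟨(a₁.den:ℤ)*a₂.den*a₃.den*b₁.den*b₂.den, by rw [hD]; ring⟩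
    have h1Q : (p₁:ℚ)^2+(p₂:ℚ)^2+(p₃:ℚ)^2+(D:ℚ)^2
        = (d:ℚ)*((r₁:ℚ)^2+(r₂:ℚ)^2+(r₃:ℚ)^2) := by
      linear_combination (D:ℚ)^2 * hAq + ((p₁:ℚ)+a₁*D)*hp₁ + ((p₂:ℚ)+a₂*D)*hp₂
        + ((p₃:ℚ)+a₃*D)*hp₃ - (d:ℚ)*((r₁:ℚ)+b₁*D)*hr₁ - (d:ℚ)*((r₂:ℚ)+b₂*D)*hr₂
        - (d:ℚ)*((r₃:ℚ)+b₃*D)*hr₃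
    have h2Q : (p₁:ℚ)*r₁+(p₂:ℚ)*r₂+(p₃:ℚ)*r₃ = 0 := by
      linear_combination (D:ℚ)^2 * hBq + (r₁:ℚ)*hp₁ + (r₂:ℚ)*hp₂ + (r₃:ℚ)*hp₃
        + (a₁*D:ℚ)*hr₁ + (a₂*D:ℚ)*hr₂ + (a₃*D:ℚ)*hr₃
    have h1 : p₁^2+p₂^2+p₃^2 + D^2 = (d:ℤ) * (r₁^2+r₂^2+r₃^2) := by exact_mod_cast h1Q
    have h2 : p₁*r₁+p₂*r₂+p₃*r₃ = 0 := by exact_mod_cast h2Q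
    have hd8 : (8:ℤ) ∣ (d:ℤ) + 1 := ⟨m+1, by rw [hd]; push_cast; ring⟩
    exact aux_no_three_int (d:ℤ) hd8 p₁ p₂ p₃ D r₁ r₂ r₃ hD0 h1 h2
end
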